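/- Let T be a complex algebraic torus with involution θ and β a θ-fixed character with coroot β^∨ (θβ^∨ = β^∨, ⟨β,β^∨⟩ = 2). If t ∈ T satisfies β(t) = −1, then t·θ(t) ∈ (1+θ)(ker β) · ⟨β^∨(−1)⟩; consequently ker(β restricted to (T^θ)⁰) = (1+θ)(ker β) · ⟨β^∨(−1)⟩, where (T^θ)⁰ = (1+θ)T. -/

import Mathlib

/-- The complex torus `T = (ℂˣ)^n`. -/
abbrev Torus (n : ℕ) := Fin n → ℂˣ

/-- The algebraic character of `T = (ℂˣ)^n` with exponent vector `k ∈ X*(T) = ℤ^n`. -/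
def torusChar {n : ℕ} (k : Fin n → ℤ) : Torus n →* ℂˣ where
  toFun t := ∏ i, (t i) ^ (k i)
  map_one' := by simp
  map_mul' s t := by
    simp [Pi.mul_apply, mul_zpow, Finset.prod_mul_distrib]

/-- The algebraic cocharacter of `T = (ℂˣ)^n` with exponent vector `c ∈ X_*(T) = ℤ^n`. -/
def torusCochar {n : ℕ} (c : Fin n → ℤ) : ℂˣ →* Torus n where
  toFun z := fun i => z ^ (c i)
  map_one' := by funext i; simp
  map_mul' z w := by funext i; simp [mul_zpow]

/-- Pairing: `β ∘ β^∨` is `z ↦ z^⟨β,β^∨⟩`. -/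
lemma torusChar_torusCochar {n : ℕ} (k c : Fin n → ℤ) (z : ℂˣ) :
    torusChar k (torusCochar c z) = z ^ (∑ i, c i * k i) := by
  simp only [torusChar, torusCochar, MonoidHom.coe_mk, OneHom.coe_mk, ← zpow_mul]
  induction (Finset.univ : Finset (Fin n)) using Finset.induction with
  | empty => simp
  | insert _ _ h ih => rw [Finset.prod_insert h, Finset.sum_insert h, ih, zpow_add]

/-- The unit `i ∈ ℂˣ`. -/
noncomputable def iUnit : ℂˣ := Units.mk0 Complex.I Complex.I_ne_zero

lemma iUnit_sq : iUnit ^ 2 = -1 := by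
  ext
  simp [iUnit, Complex.I_sq]

theorem kernel_on_identity_component_eq_norms_times_cocharacter
    (n : ℕ) (θ : Torus n →* Torus n) (hcont : Continuous θ) (hθ : ∀ t, θ (θ t) = t)
    (k c : Fin n → ℤ)
    (hβθ : ∀ t, torusChar k (θ t) = torusChar k t)
    (hθc : ∀ z : ℂˣ, θ (torusCochar c z) = torusCochar c z)
    (hpair : ∑ i, c i * k i = 2) :
    (∀ t : Torus n, torusChar k t = -1 →
      ∃ (s : Torus n) (m : ℤ), torusChar k s = 1 ∧
        t * θ t = (s * θ s) * (torusCochar c (-1)) ^ m) ∧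
    ({x : Torus n | (∃ t, x = t * θ t) ∧ torusChar k x = 1}
      = {x : Torus n | ∃ (s : Torus n) (m : ℤ),
          torusChar k s = 1 ∧ x = (s * θ s) * (torusCochar c (-1)) ^ m}) := by
  have hcomp : ∀ z : ℂˣ, torusChar k (torusCochar c z) = z ^ (2 : ℤ) := by
    intro z; rw [torusChar_torusCochar, hpair]
  -- key lemma (part a)
  have ha : ∀ t : Torus n, torusChar k t = -1 →
      ∃ (s : Torus n) (m : ℤ), torusChar k s = 1 ∧
        t * θ t = (s * θ s) * (torusCochar c (-1)) ^ m := by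
    intro t ht
    refine ⟨t * torusCochar c iUnit, -1, ?_, ?_⟩
    · rw [map_mul, ht, hcomp, show (2:ℤ) = ((2:ℕ):ℤ) from rfl, zpow_natCast, iUnit_sq]
      simp
    · have : θ (t * torusCochar c iUnit) = θ t * torusCochar c iUnit := by
        rw [map_mul, hθc]
      rw [this]
      have hsq : torusCochar c iUnit * torusCochar c iUnit = torusCochar c (-1) := by
        rw [← map_mul, ← sq, iUnit_sq]
      have : t * torusCochar c iUnit * (θ t * torusCochar c iUnit)
          = (t * θ t) * torusCochar c (-1) := by
        rw [← hsq]; exact mul_mul_mul_comm t _ (θ t) _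
      rw [this, zpow_neg, zpow_one, mul_assoc, mul_inv_cancel, mul_one]
  refine ⟨ha, ?_⟩
  ext x
  simp only [Set.mem_setOf_eq]
  constructor
  · rintro ⟨⟨t, rfl⟩, hx⟩
    rw [map_mul, hβθ, ← sq] at hx
    have hval : ((torusChar k t : ℂˣ) : ℂ) ^ 2 = 1 := by
      have := congrArg (Units.val) hx
      simpa using this
    rcases sq_eq_one_iff.mp hval with h1 | h1
    · exact ⟨t, 0, Units.ext h1, by simp⟩
    · exact ha t (Units.ext h1)
  · rintro ⟨s, m, hs, rfl⟩
    constructor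
    · refine ⟨s * torusCochar c (iUnit ^ m), ?_⟩
      have hθ' : θ (s * torusCochar c (iUnit ^ m))
          = θ s * torusCochar c (iUnit ^ m) := by rw [map_mul, hθc]
      rw [hθ']
      have h1 : iUnit ^ m * iUnit ^ m = ((-1 : ℂˣ)) ^ m := by
        rw [← iUnit_sq]; group
      have : torusCochar c (iUnit ^ m) * torusCochar c (iUnit ^ m)
          = torusCochar c (-1) ^ m := by
        rw [← map_mul, h1, map_zpow]
      calc (s * θ s) * torusCochar c (-1) ^ m
          = (s * θ s) * (torusCochar c (iUnit ^ m) * torusCochar c (iUnit ^ m)) := by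
            rw [this]
        _ = s * torusCochar c (iUnit ^ m) * (θ s * torusCochar c (iUnit ^ m)) :=
            (mul_mul_mul_comm s _ (θ s) _).symm
    · rw [map_mul, map_mul, hβθ, hs, map_zpow, hcomp,
        show (2:ℤ) = ((2:ℕ):ℤ) from rfl, zpow_natCast, neg_one_sq, one_zpow]
      simp
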